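/- Let a¹¹, a¹², b¹, T^X be real numbers with T^X > 0, let μ = (μ₁, μ₂) ∈ ℝ², and let Σ be a symmetric positive-definite real 2×2 matrix. Let p(x,y) be the bivariate Gaussian density with mean μ and covariance Σ, with marginals p_X(x) = (2πΣ¹¹)^{-1/2} exp(−(x−μ₁)²/(2Σ¹¹)) and p_Y(y) = (2πΣ²²)^{-1/2} exp(−(y−μ₂)²/(2Σ²²)), and define the flux J^X(x,y) := (a¹¹x + a¹²y + b¹) p(x,y) − T^X ∂_x p(x,y). Then the learning-rate integral evaluates to ∫_{ℝ²} J^X(x,y) · ∂_x ln( p(x,y) / (p_X(x) p_Y(y)) ) dx dy = a¹² Σ¹²/Σ¹¹ − T^X Σ²²/det Σ + T^X/Σ¹¹. (Equation (B21): the analytical expression of the learning rate l_X for linear Langevin systems in a general, possibly non-stationary, Gaussian state.) -/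

import Mathlib

set_option linter.unusedSectionVars false
set_option linter.unusedVariables false
set_option linter.unnecessarySeqFocus false
set_option linter.unusedTactic false
set_option maxHeartbeats 1000000

open Real Matrix MeasureTheory

/-- The bivariate Gaussian density with mean `μ` and covariance matrix `S`:
`p(x,y) = (2π √(det S))⁻¹ exp(−½ ((x,y) − μ)ᵀ S⁻¹ ((x,y) − μ))`. -/
noncomputable def gauss2 (μ : Fin 2 → ℝ) (S : Matrix (Fin 2) (Fin 2) ℝ) (x y : ℝ) : ℝ :=
  (2 * π * Real.sqrt S.det)⁻¹ *
    Real.exp (-(1 / 2) * ((![x, y] - μ) ⬝ᵥ (S⁻¹ *ᵥ (![x, y] - μ))))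

/-- The one-dimensional Gaussian density with mean `m` and variance `v`. -/
noncomputable def gauss1 (m v x : ℝ) : ℝ :=
  (Real.sqrt (2 * π * v))⁻¹ * Real.exp (-(x - m) ^ 2 / (2 * v))

lemma integral_mul_exp_zero {b : ℝ} (hb : 0 < b) :
    ∫ x : ℝ, x * Real.exp (-b * x ^ 2) = 0 := by
  have hderiv : ∀ x : ℝ, HasDerivAt (fun x : ℝ => (-(2*b)⁻¹) * Real.exp (-b * x ^ 2))
      (x * Real.exp (-b * x ^ 2)) x := by
    intro x
    have h1 : HasDerivAt (fun x : ℝ => -b * x ^ 2) (-b * (2 * x)) x := by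
      simpa [mul_comm, mul_assoc] using ((hasDerivAt_pow 2 x).const_mul (-b))
    have h2 := h1.exp.const_mul (-(2*b)⁻¹)
    refine h2.congr_deriv ?_
    field_simp
  exact integral_eq_zero_of_hasDerivAt_of_integrable hderiv
    (integrable_mul_exp_neg_mul_sq hb)
    ((integrable_exp_neg_mul_sq hb).const_mul _)

lemma integrable_sq_exp {b : ℝ} (hb : 0 < b) :
    Integrable fun x : ℝ => x ^ 2 * Real.exp (-b * x ^ 2) := by
  have := integrable_rpow_mul_exp_neg_mul_sq hb (s := 2) (by norm_num)
  have h2 : ∀ x : ℝ, x ^ (2:ℝ) = x ^ (2:ℕ) := fun x => by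
    rw [show ((2:ℝ)) = ((2:ℕ):ℝ) by norm_num, Real.rpow_natCast]
  simpa only [h2] using this

lemma integral_sq_exp {b : ℝ} (hb : 0 < b) :
    ∫ x : ℝ, x ^ 2 * Real.exp (-b * x ^ 2) = Real.sqrt (π / b) / (2 * b) := by
  have hderiv : ∀ x : ℝ, HasDerivAt (fun x : ℝ => x * Real.exp (-b * x ^ 2))
      (Real.exp (-b * x ^ 2) + x * (Real.exp (-b * x ^ 2) * (-b * (2 * x)))) x := by
    intro x
    have h1 : HasDerivAt (fun x : ℝ => -b * x ^ 2) (-b * (2 * x)) x := by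
      simpa [mul_comm, mul_assoc] using ((hasDerivAt_pow 2 x).const_mul (-b))
    have h2 := h1.exp
    have h3 := (hasDerivAt_id x).mul h2
    exact h3.congr_deriv (by simp)
  have hint : Integrable (fun x : ℝ => Real.exp (-b * x ^ 2) + x * (Real.exp (-b * x ^ 2) * (-b * (2 * x)))) := by
    have : (fun x : ℝ => Real.exp (-b * x ^ 2) + x * (Real.exp (-b * x ^ 2) * (-b * (2 * x))))
        = fun x : ℝ => Real.exp (-b * x ^ 2) + (-(2*b)) * (x ^ 2 * Real.exp (-b * x ^ 2)) := by
      funext x; ring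
    rw [this]
    exact (integrable_exp_neg_mul_sq hb).add ((integrable_sq_exp hb).const_mul _)
  have h0 := integral_eq_zero_of_hasDerivAt_of_integrable hderiv hint
      (integrable_mul_exp_neg_mul_sq hb)
  have hre : (fun x : ℝ => Real.exp (-b * x ^ 2) + x * (Real.exp (-b * x ^ 2) * (-b * (2 * x))))
      = fun x : ℝ => Real.exp (-b * x ^ 2) + (-(2*b)) * (x ^ 2 * Real.exp (-b * x ^ 2)) := by
    funext x; ring
  rw [hre, integral_add (integrable_exp_neg_mul_sq hb) ((integrable_sq_exp hb).const_mul _),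
    MeasureTheory.integral_const_mul, integral_gaussian] at h0
  have hb' : (2*b) ≠ 0 := by positivity
  field_simp at h0 ⊢
  linarith

section g1
variable {v : ℝ} (hv : 0 < v)
include hv

lemma gauss1_eq (x : ℝ) : gauss1 0 v x =
    (Real.sqrt (2 * π * v))⁻¹ * Real.exp (-(2*v)⁻¹ * x ^ 2) := by
  unfold gauss1; congr 1; congr 1; ring

lemma gauss1_pos (m x : ℝ) : 0 < gauss1 m v x := by
  unfold gauss1
  have : 0 < 2 * π * v := by positivity
  positivity

lemma hb2v : 0 < (2*v)⁻¹ := by positivity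

lemma gauss1_integrable : Integrable (gauss1 0 v) := by
  have : gauss1 0 v = fun x => (Real.sqrt (2 * π * v))⁻¹ * Real.exp (-(2*v)⁻¹ * x ^ 2) :=
    funext (gauss1_eq hv)
  rw [this]
  exact (integrable_exp_neg_mul_sq (hb2v hv)).const_mul _

lemma gauss1_m1_integrable : Integrable (fun x => x * gauss1 0 v x) := by
  have : (fun x => x * gauss1 0 v x)
      = fun x => (Real.sqrt (2 * π * v))⁻¹ * (x * Real.exp (-(2*v)⁻¹ * x ^ 2)) := by
    funext x; simp only [gauss1_eq hv]; ring
  rw [this]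
  exact (integrable_mul_exp_neg_mul_sq (hb2v hv)).const_mul _


lemma gauss1_m2_integrable : Integrable (fun x => x ^ 2 * gauss1 0 v x) := by
  have : (fun x => x ^ 2 * gauss1 0 v x)
      = fun x => (Real.sqrt (2 * π * v))⁻¹ * (x ^ 2 * Real.exp (-(2*v)⁻¹ * x ^ 2)) := by
    funext x; simp only [gauss1_eq hv]; ring
  rw [this]
  exact (integrable_sq_exp (hb2v hv)).const_mul _

lemma sqrt2piv : Real.sqrt (π / (2*v)⁻¹) = Real.sqrt (2 * π * v) := by
  congr 1
  field_simp

lemma gauss1_integral : ∫ x, gauss1 0 v x = 1 := by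
  have h : ∫ x, gauss1 0 v x
      = (Real.sqrt (2 * π * v))⁻¹ * ∫ x, Real.exp (-(2*v)⁻¹ * x ^ 2) := by
    rw [← MeasureTheory.integral_const_mul]
    exact integral_congr_ae (Filter.Eventually.of_forall fun x => gauss1_eq hv x)
  rw [h, integral_gaussian, sqrt2piv hv]
  have : Real.sqrt (2 * π * v) ≠ 0 := by positivity
  field_simp

lemma gauss1_m1_integral : ∫ x, x * gauss1 0 v x = 0 := by
  have h : ∫ x, x * gauss1 0 v x
      = (Real.sqrt (2 * π * v))⁻¹ * ∫ x, x * Real.exp (-(2*v)⁻¹ * x ^ 2) := by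
    rw [← MeasureTheory.integral_const_mul]
    refine integral_congr_ae (Filter.Eventually.of_forall fun x => ?_)
    simp only [gauss1_eq hv]; ring
  rw [h, integral_mul_exp_zero (hb2v hv), mul_zero]


lemma gauss1_m2_integral : ∫ x, x ^ 2 * gauss1 0 v x = v := by
  have h : ∫ x, x ^ 2 * gauss1 0 v x
      = (Real.sqrt (2 * π * v))⁻¹ * ∫ x, x ^ 2 * Real.exp (-(2*v)⁻¹ * x ^ 2) := by
    rw [← MeasureTheory.integral_const_mul]
    refine integral_congr_ae (Filter.Eventually.of_forall fun x => ?_)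
    simp only [gauss1_eq hv]; ring
  rw [h, integral_sq_exp (hb2v hv), sqrt2piv hv]
  have h1 : Real.sqrt (2 * π * v) ≠ 0 := by positivity
  have h2 : (2 * (2*v)⁻¹) = v⁻¹ := by field_simp
  rw [h2]
  field_simp

end g1



-- factorization of the explicit bivariate density into two centered 1D gaussians
lemma gauss_factorization (s0 s1 c : ℝ) (h0 : 0 < s0) (h1 : 0 < s1)
    (hd : 0 < s0 * s1 - c ^ 2) (u w : ℝ) :
    (2 * π * Real.sqrt (s0 * s1 - c ^ 2))⁻¹ *
      Real.exp (-(s1 * u ^ 2 - 2 * c * (u * w) + s0 * w ^ 2) / (2 * (s0 * s1 - c ^ 2))) =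
    gauss1 0 ((s0 * s1 - c ^ 2) / s1) (u - (c / s1) * w) * gauss1 0 s1 w := by
  set d := s0 * s1 - c ^ 2 with hdd
  have hσ : 0 < d / s1 := by positivity
  unfold gauss1
  conv_rhs => rw [mul_mul_mul_comm, ← mul_inv, ← Real.sqrt_mul (by positivity), ← Real.exp_add]
  congr 1
  · congr 1
    rw [show (2 * π * (d / s1)) * (2 * π * s1) = (2 * π) ^ 2 * d by field_simp,
      Real.sqrt_mul (by positivity), Real.sqrt_sq (by positivity)]
  · congr 1
    field_simp
    rw [hdd]
    ring




lemma gauss2_eq (μ : Fin 2 → ℝ) (S : Matrix (Fin 2) (Fin 2) ℝ)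
    (hsymm : S.IsSymm) (hd : S.det ≠ 0) (x y : ℝ) :
    gauss2 μ S x y = (2 * π * Real.sqrt S.det)⁻¹ *
      Real.exp (-(S 1 1 * (x - μ 0) ^ 2 - 2 * S 0 1 * ((x - μ 0) * (y - μ 1))
        + S 0 0 * (y - μ 1) ^ 2) / (2 * S.det)) := by
  have h10 : S 1 0 = S 0 1 := hsymm.apply 0 1
  have hinv : S⁻¹ = S.det⁻¹ • !![S 1 1, -(S 0 1); -(S 0 1), S 0 0] := by
    rw [Matrix.inv_def, Matrix.adjugate_fin_two, Ring.inverse_eq_inv', h10]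
  unfold gauss2
  congr 1
  rw [hinv]
  simp only [Matrix.smul_apply, Matrix.mulVec, dotProduct, Fin.sum_univ_two,
    Pi.sub_apply, Matrix.cons_val_zero, Matrix.cons_val_one, Matrix.head_cons,
    Matrix.cons_val', Matrix.head_fin_const, Matrix.empty_val', Matrix.cons_val_fin_one,
    smul_eq_mul, Pi.smul_apply, Matrix.of_apply]
  field_simp
  ring

lemma hasDerivAt_quad_exp (K A B C x : ℝ) :
    HasDerivAt (fun t => K * Real.exp (A * t ^ 2 + B * t + C))
      ((2 * A * x + B) * (K * Real.exp (A * x ^ 2 + B * x + C))) x := by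
  have h : HasDerivAt (fun t : ℝ => A * t ^ 2 + B * t + C) (2 * A * x + B) x := by
    have h1 := (hasDerivAt_pow 2 x).const_mul A
    have h2 := (hasDerivAt_id x).const_mul B
    have := (h1.add h2).add_const C
    refine this.congr_deriv ?_
    push_cast
    ring
  have := (h.exp).const_mul K
  refine this.congr_deriv ?_
  ring

section main
variable (μ : Fin 2 → ℝ) (S : Matrix (Fin 2) (Fin 2) ℝ)
  (hsymm : S.IsSymm) (hpd : S.PosDef)

-- explicit form as exp of quadratic polynomial in x
lemma gauss2_fun_eq (hsymm : S.IsSymm) (hd : S.det ≠ 0) (y : ℝ) :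
    (fun x' => gauss2 μ S x' y) = fun x' =>
      (2 * π * Real.sqrt S.det)⁻¹ *
        Real.exp ((-(S 1 1 / (2 * S.det))) * x' ^ 2
          + ((S 1 1 * μ 0 + S 0 1 * (y - μ 1)) / S.det) * x'
          + (-(S 1 1 * μ 0 ^ 2 + 2 * S 0 1 * (μ 0 * (y - μ 1)) + S 0 0 * (y - μ 1) ^ 2)
              / (2 * S.det))) := by
  funext x'
  rw [gauss2_eq μ S hsymm hd]
  congr 1
  field_simp
  ring

lemma deriv_gauss2 (hsymm : S.IsSymm) (hd : S.det ≠ 0) (y x : ℝ) :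
    deriv (fun x' => gauss2 μ S x' y) x
      = (-((S 1 1 * (x - μ 0) - S 0 1 * (y - μ 1)) / S.det)) * gauss2 μ S x y := by
  rw [gauss2_fun_eq μ S hsymm hd y, (hasDerivAt_quad_exp _ _ _ _ x).deriv]
  rw [show gauss2 μ S x y = (fun x' => gauss2 μ S x' y) x from rfl,
    gauss2_fun_eq μ S hsymm hd y]
  congr 1
  field_simp
  ring

end main

lemma hasDerivAt_quad (A B C x : ℝ) :
    HasDerivAt (fun t : ℝ => A * t ^ 2 + B * t + C) (2 * A * x + B) x := by
  have h1 := (hasDerivAt_pow 2 x).const_mul A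
  have h2 := (hasDerivAt_id x).const_mul B
  have := (h1.add h2).add_const C
  refine this.congr_deriv ?_
  push_cast
  ring

section main2
variable (μ : Fin 2 → ℝ) (S : Matrix (Fin 2) (Fin 2) ℝ)

lemma posdef_diag0 (hpd : S.PosDef) : 0 < S 0 0 := by
  exact hpd.diag_pos

lemma posdef_diag1 (hpd : S.PosDef) : 0 < S 1 1 := by
  exact hpd.diag_pos

lemma gauss1_pos' {v : ℝ} (hv : 0 < v) (m x : ℝ) : 0 < gauss1 m v x := by
  unfold gauss1
  have : 0 < 2 * π * v := by positivity
  positivity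

lemma gauss2_pos (hsymm : S.IsSymm) (hpd : S.PosDef) (x y : ℝ) : 0 < gauss2 μ S x y := by
  rw [gauss2_eq μ S hsymm hpd.det_pos.ne']
  have h1 : 0 < Real.sqrt S.det := Real.sqrt_pos.2 hpd.det_pos
  positivity

lemma logratio_fun_eq (hsymm : S.IsSymm) (hpd : S.PosDef) (y : ℝ) :
    (fun x' => Real.log (gauss2 μ S x' y /
        (gauss1 (μ 0) (S 0 0) x' * gauss1 (μ 1) (S 1 1) y)))
      = fun x' =>
        ((-(S 1 1 / (2 * S.det))) + (2 * S 0 0)⁻¹) * x' ^ 2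
        + ((S 1 1 * μ 0 + S 0 1 * (y - μ 1)) / S.det - μ 0 / S 0 0) * x'
        + (Real.log ((2 * π * Real.sqrt S.det)⁻¹)
            + (-(S 1 1 * μ 0 ^ 2 + 2 * S 0 1 * (μ 0 * (y - μ 1)) + S 0 0 * (y - μ 1) ^ 2)
                / (2 * S.det))
            - Real.log ((Real.sqrt (2 * π * S 0 0))⁻¹) + μ 0 ^ 2 / (2 * S 0 0)
            - Real.log (gauss1 (μ 1) (S 1 1) y)) := by
  have hd := hpd.det_pos
  have hs0 := posdef_diag0 S hpd
  have hs1 := posdef_diag1 S hpd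
  funext x'
  have hgx : gauss1 (μ 0) (S 0 0) x' ≠ 0 := (gauss1_pos' hs0 _ _).ne'
  have hgy : gauss1 (μ 1) (S 1 1) y ≠ 0 := (gauss1_pos' hs1 _ _).ne'
  have hK : (2 * π * Real.sqrt S.det)⁻¹ ≠ 0 := by
    have : 0 < Real.sqrt S.det := Real.sqrt_pos.2 hd
    positivity
  have hc0 : (Real.sqrt (2 * π * S 0 0))⁻¹ ≠ 0 := by
    have : (0:ℝ) < 2 * π * S 0 0 := by positivity
    have := Real.sqrt_pos.2 this
    positivity
  rw [Real.log_div (gauss2_pos μ S hsymm hpd x' y).ne' (mul_ne_zero hgx hgy),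
    Real.log_mul hgx hgy]
  rw [show gauss2 μ S x' y = (fun x'' => gauss2 μ S x'' y) x' from rfl,
    gauss2_fun_eq μ S hsymm hd.ne' y]
  simp only []
  rw [Real.log_mul hK (Real.exp_ne_zero _), Real.log_exp]
  conv_lhs => rw [show gauss1 (μ 0) (S 0 0) x'
      = (Real.sqrt (2 * π * S 0 0))⁻¹ * Real.exp (-(x' - μ 0) ^ 2 / (2 * S 0 0)) from rfl]
  rw [Real.log_mul hc0 (Real.exp_ne_zero _), Real.log_exp]
  field_simp
  ring

lemma deriv_logratio (hsymm : S.IsSymm) (hpd : S.PosDef) (y x : ℝ) :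
    deriv (fun x' => Real.log (gauss2 μ S x' y /
        (gauss1 (μ 0) (S 0 0) x' * gauss1 (μ 1) (S 1 1) y))) x
      = -((S 1 1 * (x - μ 0) - S 0 1 * (y - μ 1)) / S.det) + (x - μ 0) / S 0 0 := by
  have hd := hpd.det_pos
  have hs0 := posdef_diag0 S hpd
  rw [logratio_fun_eq μ S hsymm hpd y, (hasDerivAt_quad _ _ _ x).deriv]
  field_simp
  ring

end main2


lemma integral_comp_shear (k a b : ℝ) (Φ : ℝ × ℝ → ℝ) :
    ∫ v : ℝ × ℝ, Φ (v.1 - a - k * (v.2 - b), v.2 - b) = ∫ p : ℝ × ℝ, Φ p := by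
  have sub_right : ∀ t : ℝ, MeasurePreserving (fun x : ℝ => x - t) volume volume :=
    fun t => measurePreserving_sub_right volume t
  have hskew : MeasurePreserving
      (fun p : ℝ × ℝ => (p.1 - b, p.2 - a - k * (p.1 - b)))
      (volume.prod volume) (volume.prod volume) := by
    refine MeasurePreserving.skew_product (g := fun y x => x - a - k * (y - b))
      (sub_right b) ?_ ?_
    · fun_prop
    · refine Filter.Eventually.of_forall fun t => ?_
      have h : ((fun y x : ℝ => x - a - k * (y - b)) t) = fun x => x - (a + k * (t - b)) := by
        funext x; simp only []; ring
      beta_reduce at h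
      rw [h]
      exact (sub_right _).map_eq
  have hT : MeasurePreserving
      (fun v : ℝ × ℝ => (v.1 - a - k * (v.2 - b), v.2 - b))
      (volume.prod volume) (volume.prod volume) := by
    have h := ((Measure.measurePreserving_swap).comp (hskew.comp Measure.measurePreserving_swap) :
      MeasurePreserving _ (volume.prod volume) (volume.prod volume))
    convert h using 1
    rfl
  have hTemb : MeasurableEmbedding
      (fun v : ℝ × ℝ => (v.1 - a - k * (v.2 - b), v.2 - b)) := by
    let e : ℝ × ℝ ≃ₜ ℝ × ℝ :=
      Homeomorph.mk
        ⟨fun v => (v.1 - a - k * (v.2 - b), v.2 - b),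
         fun p => (p.1 + a + k * p.2, p.2 + b),
         fun v => by simp only []; apply Prod.ext <;> simp <;> ring,
         fun p => by simp only []; apply Prod.ext <;> simp <;> ring⟩
        (by fun_prop) (by fun_prop)
    exact e.measurableEmbedding
  rw [Measure.volume_eq_prod ℝ ℝ]
  exact hT.integral_comp hTemb Φ


/-- Equation (B21): the learning-rate integral
`∫ J^X ∂_x ln(p/(p_X p_Y)) dx dy = a¹² Σ¹²/Σ¹¹ − T^X Σ²²/det Σ + T^X/Σ¹¹`
for a bivariate Gaussian state of the bipartite linear Langevin system. -/
theorem learning_rate_formula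
    (a11 a12 b1 TX : ℝ) (hTX : 0 < TX)
    (μ : Fin 2 → ℝ) (S : Matrix (Fin 2) (Fin 2) ℝ)
    (hsymm : S.IsSymm) (hpd : S.PosDef) :
    (∫ v : ℝ × ℝ,
        ((a11 * v.1 + a12 * v.2 + b1) * gauss2 μ S v.1 v.2 -
            TX * deriv (fun x' => gauss2 μ S x' v.2) v.1) *
          deriv (fun x' => Real.log (gauss2 μ S x' v.2 /
            (gauss1 (μ 0) (S 0 0) x' * gauss1 (μ 1) (S 1 1) v.2))) v.1) =
      a12 * S 0 1 / S 0 0 - TX * S 1 1 / S.det + TX / S 0 0 := by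
  have hd : 0 < S.det := hpd.det_pos
  have hs0 : 0 < S 0 0 := posdef_diag0 S hpd
  have hs1 : 0 < S 1 1 := posdef_diag1 S hpd
  have hdet : S.det = S 0 0 * S 1 1 - S 0 1 ^ 2 := by
    rw [Matrix.det_fin_two, hsymm.apply 0 1]; ring
  have hD : 0 < S 0 0 * S 1 1 - S 0 1 ^ 2 := hdet ▸ hd
  have hV : 0 < ((S 0 0 * S 1 1 - S 0 1 ^ 2) / S 1 1) := by positivity
  have hmaster : ∀ x y : ℝ,
      ((a11 * x + a12 * y + b1) * gauss2 μ S x y -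
          TX * deriv (fun x' => gauss2 μ S x' y) x) *
        deriv (fun x' => Real.log (gauss2 μ S x' y /
          (gauss1 (μ 0) (S 0 0) x' * gauss1 (μ 1) (S 1 1) y))) x
      = ((a11 + TX * S 1 1 / (S 0 0 * S 1 1 - S 0 1 ^ 2)) * (x - μ 0 - S 0 1 / S 1 1 * (y - μ 1)) + (a11 * S 0 1 / S 1 1 + a12) * (y - μ 1) + (a11 * μ 0 + a12 * μ 1 + b1)) * ((-(S 0 1 ^ 2 / (S 0 0 * (S 0 0 * S 1 1 - S 0 1 ^ 2)))) * (x - μ 0 - S 0 1 / S 1 1 * (y - μ 1)) + (S 0 1 / (S 0 0 * S 1 1)) * (y - μ 1)) *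
          (gauss1 0 ((S 0 0 * S 1 1 - S 0 1 ^ 2) / S 1 1) (x - μ 0 - S 0 1 / S 1 1 * (y - μ 1)) * gauss1 0 (S 1 1) (y - μ 1)) := by
    intro x y
    rw [deriv_gauss2 μ S hsymm hd.ne' y x, deriv_logratio μ S hsymm hpd y x,
      gauss2_eq μ S hsymm hd.ne' x y, hdet,
      gauss_factorization (S 0 0) (S 1 1) (S 0 1) hs0 hs1 hD (x - μ 0) (y - μ 1)]
    field_simp
    ring
  have hfun : (fun v : ℝ × ℝ =>
      ((a11 * v.1 + a12 * v.2 + b1) * gauss2 μ S v.1 v.2 -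
          TX * deriv (fun x' => gauss2 μ S x' v.2) v.1) *
        deriv (fun x' => Real.log (gauss2 μ S x' v.2 /
          (gauss1 (μ 0) (S 0 0) x' * gauss1 (μ 1) (S 1 1) v.2))) v.1)
      = fun v : ℝ × ℝ =>
        (fun p : ℝ × ℝ => ((a11 + TX * S 1 1 / (S 0 0 * S 1 1 - S 0 1 ^ 2)) * p.1 + (a11 * S 0 1 / S 1 1 + a12) * p.2 + (a11 * μ 0 + a12 * μ 1 + b1)) * ((-(S 0 1 ^ 2 / (S 0 0 * (S 0 0 * S 1 1 - S 0 1 ^ 2)))) * p.1 + (S 0 1 / (S 0 0 * S 1 1)) * p.2) *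
            (gauss1 0 ((S 0 0 * S 1 1 - S 0 1 ^ 2) / S 1 1) p.1 * gauss1 0 (S 1 1) p.2))
          (v.1 - μ 0 - S 0 1 / S 1 1 * (v.2 - μ 1), v.2 - μ 1) := by
    funext v
    exact hmaster v.1 v.2
  rw [hfun, integral_comp_shear (S 0 1 / S 1 1) (μ 0) (μ 1)
    (fun p : ℝ × ℝ => ((a11 + TX * S 1 1 / (S 0 0 * S 1 1 - S 0 1 ^ 2)) * p.1 + (a11 * S 0 1 / S 1 1 + a12) * p.2 + (a11 * μ 0 + a12 * μ 1 + b1)) * ((-(S 0 1 ^ 2 / (S 0 0 * (S 0 0 * S 1 1 - S 0 1 ^ 2)))) * p.1 + (S 0 1 / (S 0 0 * S 1 1)) * p.2) *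
            (gauss1 0 ((S 0 0 * S 1 1 - S 0 1 ^ 2) / S 1 1) p.1 * gauss1 0 (S 1 1) p.2))]
  beta_reduce
  have hGsum : (fun p : ℝ × ℝ => ((a11 + TX * S 1 1 / (S 0 0 * S 1 1 - S 0 1 ^ 2)) * p.1 + (a11 * S 0 1 / S 1 1 + a12) * p.2 + (a11 * μ 0 + a12 * μ 1 + b1)) * ((-(S 0 1 ^ 2 / (S 0 0 * (S 0 0 * S 1 1 - S 0 1 ^ 2)))) * p.1 + (S 0 1 / (S 0 0 * S 1 1)) * p.2) *
        (gauss1 0 ((S 0 0 * S 1 1 - S 0 1 ^ 2) / S 1 1) p.1 * gauss1 0 (S 1 1) p.2))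
      = fun p : ℝ × ℝ =>
        ((a11 + TX * S 1 1 / (S 0 0 * S 1 1 - S 0 1 ^ 2)) * (-(S 0 1 ^ 2 / (S 0 0 * (S 0 0 * S 1 1 - S 0 1 ^ 2)))) * (p.1 ^ 2 * gauss1 0 ((S 0 0 * S 1 1 - S 0 1 ^ 2) / S 1 1) p.1)) * gauss1 0 (S 1 1) p.2
        + (((a11 + TX * S 1 1 / (S 0 0 * S 1 1 - S 0 1 ^ 2)) * (S 0 1 / (S 0 0 * S 1 1)) + (a11 * S 0 1 / S 1 1 + a12) * (-(S 0 1 ^ 2 / (S 0 0 * (S 0 0 * S 1 1 - S 0 1 ^ 2))))) * (p.1 * gauss1 0 ((S 0 0 * S 1 1 - S 0 1 ^ 2) / S 1 1) p.1)) * (p.2 * gauss1 0 (S 1 1) p.2)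
        + ((a11 * S 0 1 / S 1 1 + a12) * (S 0 1 / (S 0 0 * S 1 1)) * gauss1 0 ((S 0 0 * S 1 1 - S 0 1 ^ 2) / S 1 1) p.1) * (p.2 ^ 2 * gauss1 0 (S 1 1) p.2)
        + ((a11 * μ 0 + a12 * μ 1 + b1) * (-(S 0 1 ^ 2 / (S 0 0 * (S 0 0 * S 1 1 - S 0 1 ^ 2)))) * (p.1 * gauss1 0 ((S 0 0 * S 1 1 - S 0 1 ^ 2) / S 1 1) p.1)) * gauss1 0 (S 1 1) p.2
        + ((a11 * μ 0 + a12 * μ 1 + b1) * (S 0 1 / (S 0 0 * S 1 1)) * gauss1 0 ((S 0 0 * S 1 1 - S 0 1 ^ 2) / S 1 1) p.1) * (p.2 * gauss1 0 (S 1 1) p.2) := by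
    funext p
    ring
  rw [hGsum, Measure.volume_eq_prod ℝ ℝ]
  have hg1V := gauss1_integrable hV
  have hg1s := gauss1_integrable hs1
  have hm1V := gauss1_m1_integrable hV
  have hm1s := gauss1_m1_integrable hs1
  have hm2V := gauss1_m2_integrable hV
  have hm2s := gauss1_m2_integrable hs1
  have J1 : Integrable (fun p : ℝ × ℝ =>
      ((a11 + TX * S 1 1 / (S 0 0 * S 1 1 - S 0 1 ^ 2)) * (-(S 0 1 ^ 2 / (S 0 0 * (S 0 0 * S 1 1 - S 0 1 ^ 2)))) * (p.1 ^ 2 * gauss1 0 ((S 0 0 * S 1 1 - S 0 1 ^ 2) / S 1 1) p.1)) * gauss1 0 (S 1 1) p.2)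
      (volume.prod volume) := (hm2V.const_mul _).mul_prod hg1s
  have J2 : Integrable (fun p : ℝ × ℝ =>
      (((a11 + TX * S 1 1 / (S 0 0 * S 1 1 - S 0 1 ^ 2)) * (S 0 1 / (S 0 0 * S 1 1)) + (a11 * S 0 1 / S 1 1 + a12) * (-(S 0 1 ^ 2 / (S 0 0 * (S 0 0 * S 1 1 - S 0 1 ^ 2))))) * (p.1 * gauss1 0 ((S 0 0 * S 1 1 - S 0 1 ^ 2) / S 1 1) p.1)) * (p.2 * gauss1 0 (S 1 1) p.2))
      (volume.prod volume) := (hm1V.const_mul _).mul_prod hm1s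
  have J3 : Integrable (fun p : ℝ × ℝ =>
      ((a11 * S 0 1 / S 1 1 + a12) * (S 0 1 / (S 0 0 * S 1 1)) * gauss1 0 ((S 0 0 * S 1 1 - S 0 1 ^ 2) / S 1 1) p.1) * (p.2 ^ 2 * gauss1 0 (S 1 1) p.2))
      (volume.prod volume) := (hg1V.const_mul _).mul_prod hm2s
  have J4 : Integrable (fun p : ℝ × ℝ =>
      ((a11 * μ 0 + a12 * μ 1 + b1) * (-(S 0 1 ^ 2 / (S 0 0 * (S 0 0 * S 1 1 - S 0 1 ^ 2)))) * (p.1 * gauss1 0 ((S 0 0 * S 1 1 - S 0 1 ^ 2) / S 1 1) p.1)) * gauss1 0 (S 1 1) p.2)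
      (volume.prod volume) := (hm1V.const_mul _).mul_prod hg1s
  have J5 : Integrable (fun p : ℝ × ℝ =>
      ((a11 * μ 0 + a12 * μ 1 + b1) * (S 0 1 / (S 0 0 * S 1 1)) * gauss1 0 ((S 0 0 * S 1 1 - S 0 1 ^ 2) / S 1 1) p.1) * (p.2 * gauss1 0 (S 1 1) p.2))
      (volume.prod volume) := (hg1V.const_mul _).mul_prod hm1s
  have K12 : Integrable (fun p : ℝ × ℝ =>
      ((a11 + TX * S 1 1 / (S 0 0 * S 1 1 - S 0 1 ^ 2)) * (-(S 0 1 ^ 2 / (S 0 0 * (S 0 0 * S 1 1 - S 0 1 ^ 2)))) * (p.1 ^ 2 * gauss1 0 ((S 0 0 * S 1 1 - S 0 1 ^ 2) / S 1 1) p.1)) * gauss1 0 (S 1 1) p.2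
      + (((a11 + TX * S 1 1 / (S 0 0 * S 1 1 - S 0 1 ^ 2)) * (S 0 1 / (S 0 0 * S 1 1)) + (a11 * S 0 1 / S 1 1 + a12) * (-(S 0 1 ^ 2 / (S 0 0 * (S 0 0 * S 1 1 - S 0 1 ^ 2))))) * (p.1 * gauss1 0 ((S 0 0 * S 1 1 - S 0 1 ^ 2) / S 1 1) p.1)) * (p.2 * gauss1 0 (S 1 1) p.2)) (volume.prod volume) := J1.add J2
  have K123 : Integrable (fun p : ℝ × ℝ =>
      ((a11 + TX * S 1 1 / (S 0 0 * S 1 1 - S 0 1 ^ 2)) * (-(S 0 1 ^ 2 / (S 0 0 * (S 0 0 * S 1 1 - S 0 1 ^ 2)))) * (p.1 ^ 2 * gauss1 0 ((S 0 0 * S 1 1 - S 0 1 ^ 2) / S 1 1) p.1)) * gauss1 0 (S 1 1) p.2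
      + (((a11 + TX * S 1 1 / (S 0 0 * S 1 1 - S 0 1 ^ 2)) * (S 0 1 / (S 0 0 * S 1 1)) + (a11 * S 0 1 / S 1 1 + a12) * (-(S 0 1 ^ 2 / (S 0 0 * (S 0 0 * S 1 1 - S 0 1 ^ 2))))) * (p.1 * gauss1 0 ((S 0 0 * S 1 1 - S 0 1 ^ 2) / S 1 1) p.1)) * (p.2 * gauss1 0 (S 1 1) p.2)
      + ((a11 * S 0 1 / S 1 1 + a12) * (S 0 1 / (S 0 0 * S 1 1)) * gauss1 0 ((S 0 0 * S 1 1 - S 0 1 ^ 2) / S 1 1) p.1) * (p.2 ^ 2 * gauss1 0 (S 1 1) p.2)) (volume.prod volume) := K12.add J3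
  have K1234 : Integrable (fun p : ℝ × ℝ =>
      ((a11 + TX * S 1 1 / (S 0 0 * S 1 1 - S 0 1 ^ 2)) * (-(S 0 1 ^ 2 / (S 0 0 * (S 0 0 * S 1 1 - S 0 1 ^ 2)))) * (p.1 ^ 2 * gauss1 0 ((S 0 0 * S 1 1 - S 0 1 ^ 2) / S 1 1) p.1)) * gauss1 0 (S 1 1) p.2
      + (((a11 + TX * S 1 1 / (S 0 0 * S 1 1 - S 0 1 ^ 2)) * (S 0 1 / (S 0 0 * S 1 1)) + (a11 * S 0 1 / S 1 1 + a12) * (-(S 0 1 ^ 2 / (S 0 0 * (S 0 0 * S 1 1 - S 0 1 ^ 2))))) * (p.1 * gauss1 0 ((S 0 0 * S 1 1 - S 0 1 ^ 2) / S 1 1) p.1)) * (p.2 * gauss1 0 (S 1 1) p.2)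
      + ((a11 * S 0 1 / S 1 1 + a12) * (S 0 1 / (S 0 0 * S 1 1)) * gauss1 0 ((S 0 0 * S 1 1 - S 0 1 ^ 2) / S 1 1) p.1) * (p.2 ^ 2 * gauss1 0 (S 1 1) p.2)
      + ((a11 * μ 0 + a12 * μ 1 + b1) * (-(S 0 1 ^ 2 / (S 0 0 * (S 0 0 * S 1 1 - S 0 1 ^ 2)))) * (p.1 * gauss1 0 ((S 0 0 * S 1 1 - S 0 1 ^ 2) / S 1 1) p.1)) * gauss1 0 (S 1 1) p.2) (volume.prod volume) := K123.add J4
  rw [integral_add K1234 J5,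
    integral_add K123 J4,
    integral_add K12 J3,
    integral_add J1 J2,
    integral_prod_mul (f := fun t : ℝ => (a11 + TX * S 1 1 / (S 0 0 * S 1 1 - S 0 1 ^ 2)) * (-(S 0 1 ^ 2 / (S 0 0 * (S 0 0 * S 1 1 - S 0 1 ^ 2)))) * (t ^ 2 * gauss1 0 ((S 0 0 * S 1 1 - S 0 1 ^ 2) / S 1 1) t))
      (g := gauss1 0 (S 1 1)),
    integral_prod_mul (f := fun t : ℝ => ((a11 + TX * S 1 1 / (S 0 0 * S 1 1 - S 0 1 ^ 2)) * (S 0 1 / (S 0 0 * S 1 1)) + (a11 * S 0 1 / S 1 1 + a12) * (-(S 0 1 ^ 2 / (S 0 0 * (S 0 0 * S 1 1 - S 0 1 ^ 2))))) * (t * gauss1 0 ((S 0 0 * S 1 1 - S 0 1 ^ 2) / S 1 1) t))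
      (g := fun s : ℝ => s * gauss1 0 (S 1 1) s),
    integral_prod_mul (f := fun t : ℝ => (a11 * S 0 1 / S 1 1 + a12) * (S 0 1 / (S 0 0 * S 1 1)) * gauss1 0 ((S 0 0 * S 1 1 - S 0 1 ^ 2) / S 1 1) t)
      (g := fun s : ℝ => s ^ 2 * gauss1 0 (S 1 1) s),
    integral_prod_mul (f := fun t : ℝ => (a11 * μ 0 + a12 * μ 1 + b1) * (-(S 0 1 ^ 2 / (S 0 0 * (S 0 0 * S 1 1 - S 0 1 ^ 2)))) * (t * gauss1 0 ((S 0 0 * S 1 1 - S 0 1 ^ 2) / S 1 1) t))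
      (g := gauss1 0 (S 1 1)),
    integral_prod_mul (f := fun t : ℝ => (a11 * μ 0 + a12 * μ 1 + b1) * (S 0 1 / (S 0 0 * S 1 1)) * gauss1 0 ((S 0 0 * S 1 1 - S 0 1 ^ 2) / S 1 1) t)
      (g := fun s : ℝ => s * gauss1 0 (S 1 1) s)]
  simp only [MeasureTheory.integral_const_mul]
  rw [gauss1_m2_integral hV, gauss1_m2_integral hs1, gauss1_m1_integral hV,
    gauss1_m1_integral hs1, gauss1_integral hV, gauss1_integral hs1]
  rw [hdet]
  set D := S 0 0 * S 1 1 - S 0 1 ^ 2 with hDdef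
  have hD' : D ≠ 0 := hD.ne'
  field_simp
  rw [hDdef]
  ring
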